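/- Let K ⊂ ℝ² be a compact convex set with nonempty interior containing the origin (points written z = (x,y)), let a > 0 with (a,0) in the interior of K, and let u = (u₁,u₂) ∈ ℝ²∖{(0,0)} with u₁ ≥ 0. Define f(λ) := ∫_{K ∩ {z : ⟨u,z⟩ ≥ λ}} (u₁(x−a) + u₂ y)·x² dx dy. If f(0) ≥ 0, then f(λ) > 0 for every λ with 0 < λ < sup_{z∈K} ⟨u,z⟩. -/

import Mathlib

open MeasureTheory Metric

noncomputable section

lemma integral_pos_of_ball {h : ℝ × ℝ → ℝ} (hc : Continuous h) {S : Set (ℝ × ℝ)}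
    (hS : MeasurableSet S) (hint : IntegrableOn h S) (hnn : ∀ z ∈ S, 0 ≤ h z)
    {p : ℝ × ℝ} {r : ℝ} (hr : 0 < r) (hball : Metric.ball p r ⊆ S) (hp : 0 < h p) :
    0 < ∫ z in S, h z := by
  have hev : ∀ᶠ z in nhds p, h p / 2 < h z :=
    (hc.tendsto p).eventually (eventually_gt_nhds (by linarith))
  obtain ⟨r', hr', hsub⟩ := Metric.eventually_nhds_iff_ball.1 hev
  set ρ := min r r' with hρ
  have hρpos : 0 < ρ := lt_min hr hr'
  have hballS : Metric.ball p ρ ⊆ S := fun z hz => hball (ball_subset_ball (min_le_left _ _) hz)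
  have h1 : h p / 2 * (volume (Metric.ball p ρ)).toReal ≤ ∫ z in Metric.ball p ρ, h z :=
    setIntegral_ge_of_const_le_real measurableSet_ball measure_ball_lt_top.ne
      (fun z hz => (hsub z (ball_subset_ball (min_le_right _ _) hz)).le)
      (hint.mono_set hballS)
  have h2 : ∫ z in Metric.ball p ρ, h z ≤ ∫ z in S, h z := by
    refine setIntegral_mono_set hint ?_ (Filter.Eventually.of_forall hballS)
    filter_upwards [ae_restrict_mem hS] with z hz using hnn z hz
  have hvol : 0 < (volume (Metric.ball p ρ)).toReal :=
    ENNReal.toReal_pos (measure_ball_pos volume p hρpos).ne' measure_ball_lt_top.ne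
  nlinarith

/-- auxiliary: existence of a point of an open set with nonzero first coordinate,
together with a ball around it inside the set. -/
lemma exists_ball_fst_ne_zero {V : Set (ℝ × ℝ)} (hV : IsOpen V) {p₀ : ℝ × ℝ} (hp₀ : p₀ ∈ V) :
    ∃ p ∈ V, p.1 ≠ 0 ∧ ∃ r > 0, Metric.ball p r ⊆ V := by
  obtain ⟨r, hr, hball⟩ := Metric.isOpen_iff.1 hV p₀ hp₀
  by_cases h1 : p₀.1 = 0
  · have hpmem : (p₀ + (r / 2, 0)) ∈ Metric.ball p₀ r := by
      have : dist (p₀ + (r / 2, 0)) p₀ = r / 2 := by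
        simp [Prod.dist_eq, Real.dist_eq, abs_of_pos (half_pos hr), Prod.norm_def,
          Real.norm_eq_abs]
        rw [abs_of_pos hr, max_eq_left (half_pos hr).le]
      rw [Metric.mem_ball, this]; linarith
    have hp : (p₀ + (r / 2, 0)) ∈ V := hball hpmem
    obtain ⟨r₂, hr₂, hball₂⟩ := Metric.isOpen_iff.1 hV _ hp
    exact ⟨_, hp, by simp [h1, hr.ne'], r₂, hr₂, hball₂⟩
  · exact ⟨p₀, hp₀, h1, r, hr, hball⟩

theorem stmt11 (K : Set (ℝ × ℝ)) (hKcpt : IsCompact K) (hKconv : Convex ℝ K)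
    (hKint : (interior K).Nonempty) (h0 : ((0, 0) : ℝ × ℝ) ∈ K)
    (a : ℝ) (ha : 0 < a) (haK : ((a, 0) : ℝ × ℝ) ∈ interior K)
    (u₁ u₂ : ℝ) (hu : (u₁, u₂) ≠ ((0 : ℝ), (0 : ℝ))) (hu₁ : 0 ≤ u₁)
    (hf0 : 0 ≤ ∫ z in K ∩ {z : ℝ × ℝ | 0 ≤ u₁ * z.1 + u₂ * z.2},
        (u₁ * (z.1 - a) + u₂ * z.2) * z.1 ^ 2) :
    ∀ lam : ℝ, 0 < lam →
      lam < sSup ((fun z : ℝ × ℝ => u₁ * z.1 + u₂ * z.2) '' K) →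
      0 < ∫ z in K ∩ {z : ℝ × ℝ | lam ≤ u₁ * z.1 + u₂ * z.2},
          (u₁ * (z.1 - a) + u₂ * z.2) * z.1 ^ 2 := by
  intro lam hlam hlamM
  have hφc : Continuous fun z : ℝ × ℝ => u₁ * z.1 + u₂ * z.2 := by fun_prop
  have hhc : Continuous fun z : ℝ × ℝ => (u₁ * (z.1 - a) + u₂ * z.2) * z.1 ^ 2 := by fun_prop
  have hKm : MeasurableSet K := hKcpt.isClosed.measurableSet
  have hintK : IntegrableOn (fun z : ℝ × ℝ => (u₁ * (z.1 - a) + u₂ * z.2) * z.1 ^ 2) K :=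
    hhc.continuousOn.integrableOn_compact hKcpt
  -- the max of φ on K
  obtain ⟨q, hqK, hq⟩ := hKcpt.exists_isMaxOn ⟨_, h0⟩ hφc.continuousOn
  have hM : sSup ((fun z : ℝ × ℝ => u₁ * z.1 + u₂ * z.2) '' K) = u₁ * q.1 + u₂ * q.2 := by
    refine IsGreatest.csSup_eq ⟨Set.mem_image_of_mem _ hqK, ?_⟩
    rintro y ⟨z, hz, rfl⟩
    exact hq hz
  rw [hM] at hlamM
  set M : ℝ := u₁ * q.1 + u₂ * q.2 with hMdef
  have hA2m : MeasurableSet (K ∩ {z : ℝ × ℝ | lam ≤ u₁ * z.1 + u₂ * z.2}) :=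
    hKm.inter (measurableSet_le measurable_const hφc.measurable)
  rcases le_or_gt (u₁ * a) lam with hcase | hcase
  · -- Case A : u₁ a ≤ lam : integrand nonneg on region, positive near interior pt with φ > lam
    set t : ℝ := (M - lam) / (2 * (M - u₁ * a)) with htdef
    have hMl : lam < M := hlamM
    have hMua : 0 < M - u₁ * a := by linarith
    have ht0 : 0 < t := div_pos (by linarith) (by linarith)
    have ht1 : t ≤ 1 / 2 := by
      rw [htdef, div_le_div_iff₀ (by linarith) (by norm_num)]
      nlinarith
    have hp₀ : (1 - t) • q + t • ((a, 0) : ℝ × ℝ) ∈ interior K :=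
      hKconv.combo_self_interior_mem_interior hqK haK (by linarith) ht0 (by ring)
    set p₀ : ℝ × ℝ := (1 - t) • q + t • ((a, 0) : ℝ × ℝ) with hp₀def
    have hp₀1 : p₀.1 = (1 - t) * q.1 + t * a := rfl
    have hp₀2 : p₀.2 = (1 - t) * q.2 := by
      show (1 - t) * q.2 + t * 0 = (1 - t) * q.2; ring
    have hφp₀ : u₁ * p₀.1 + u₂ * p₀.2 = (lam + M) / 2 := by
      rw [hp₀1, hp₀2, htdef]
      field_simp
      ring
    have hVopen : IsOpen (interior K ∩ {z : ℝ × ℝ | lam < u₁ * z.1 + u₂ * z.2}) :=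
      isOpen_interior.inter (isOpen_lt continuous_const hφc)
    have hp₀V : p₀ ∈ interior K ∩ {z : ℝ × ℝ | lam < u₁ * z.1 + u₂ * z.2} :=
      ⟨hp₀, by simp only [Set.mem_setOf_eq, hφp₀]; linarith⟩
    obtain ⟨p, hpV, hp1, r, hr, hball⟩ := exists_ball_fst_ne_zero hVopen hp₀V
    have hVsub : interior K ∩ {z : ℝ × ℝ | lam < u₁ * z.1 + u₂ * z.2} ⊆
        K ∩ {z : ℝ × ℝ | lam ≤ u₁ * z.1 + u₂ * z.2} := by
      rintro z ⟨h1, h2⟩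
      refine ⟨interior_subset h1, ?_⟩
      simp only [Set.mem_setOf_eq] at h2 ⊢
      exact le_of_lt h2
    refine integral_pos_of_ball hhc hA2m (hintK.mono_set Set.inter_subset_left) ?_ hr
      (hball.trans hVsub) ?_
    · rintro z ⟨-, hz⟩
      have hz' : lam ≤ u₁ * z.1 + u₂ * z.2 := hz
      nlinarith [sq_nonneg z.1]
    · have hφp : lam < u₁ * p.1 + u₂ * p.2 := hpV.2
      have hsq : 0 < p.1 ^ 2 := by positivity
      nlinarith
  · -- Case B : lam < u₁ a
    have hu₁pos : 0 < u₁ := by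
      rcases hu₁.lt_or_eq with h | h
      · exact h
      · exfalso; rw [← h] at hcase; simp at hcase; linarith
    set t : ℝ := lam / (2 * (u₁ * a)) with htdef
    have hua : 0 < u₁ * a := by positivity
    have ht0 : 0 < t := by positivity
    have ht1 : t < 1 := by
      rw [htdef, div_lt_one (by linarith)]; nlinarith
    have hpint : (1 - t) • ((0, 0) : ℝ × ℝ) + t • ((a, 0) : ℝ × ℝ) ∈ interior K :=
      hKconv.combo_self_interior_mem_interior h0 haK (by linarith) ht0 (by ring)
    have hpeq : (1 - t) • ((0, 0) : ℝ × ℝ) + t • ((a, 0) : ℝ × ℝ) = ((t * a, 0) : ℝ × ℝ) := by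
      ext <;> simp
    rw [hpeq] at hpint
    set p : ℝ × ℝ := ((t * a, 0) : ℝ × ℝ) with hpdef
    have hφp : u₁ * p.1 + u₂ * p.2 = lam / 2 := by
      show u₁ * (t * a) + u₂ * 0 = lam / 2
      rw [htdef]; field_simp; ring
    -- the slab
    set A1 : Set (ℝ × ℝ) := K ∩ {z : ℝ × ℝ | 0 ≤ u₁ * z.1 + u₂ * z.2 ∧ u₁ * z.1 + u₂ * z.2 < lam}
      with hA1def
    have hA1m : MeasurableSet A1 :=
      hKm.inter ((measurableSet_le measurable_const hφc.measurable).inter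
        (measurableSet_lt hφc.measurable measurable_const))
    have hVopen : IsOpen (interior K ∩ {z : ℝ × ℝ | 0 < u₁ * z.1 + u₂ * z.2 ∧
        u₁ * z.1 + u₂ * z.2 < lam}) := by
      refine isOpen_interior.inter ?_
      rw [Set.setOf_and]
      exact (isOpen_lt continuous_const hφc).inter (isOpen_lt hφc continuous_const)
    have hpV : p ∈ interior K ∩ {z : ℝ × ℝ | 0 < u₁ * z.1 + u₂ * z.2 ∧
        u₁ * z.1 + u₂ * z.2 < lam} :=
      ⟨hpint, by simp only [Set.mem_setOf_eq, hφp]; constructor <;> linarith⟩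
    obtain ⟨r, hr, hball⟩ := Metric.isOpen_iff.1 hVopen p hpV
    have hVsub : interior K ∩ {z : ℝ × ℝ | 0 < u₁ * z.1 + u₂ * z.2 ∧
        u₁ * z.1 + u₂ * z.2 < lam} ⊆ A1 :=
      fun z hz => ⟨interior_subset hz.1, le_of_lt hz.2.1, hz.2.2⟩
    -- the slab integral of the negated integrand is positive
    have hneg : 0 < ∫ z in A1, -((u₁ * (z.1 - a) + u₂ * z.2) * z.1 ^ 2) := by
      refine integral_pos_of_ball (by fun_prop) hA1m
        ((hintK.mono_set Set.inter_subset_left).neg) ?_ hr (hball.trans hVsub) ?_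
      · rintro z ⟨-, hz1, hz2⟩
        nlinarith [sq_nonneg z.1]
      · have hp1 : p.1 = t * a := rfl
        have hp2 : p.2 = (0 : ℝ) := rfl
        rw [hp1, hp2]
        have h1 : 0 < a - t * a := by nlinarith
        have h2 : 0 < (t * a) ^ 2 := by positivity
        nlinarith [mul_pos (mul_pos hu₁pos h1) h2]
    rw [integral_neg] at hneg
    -- decompose the λ = 0 region
    have hset : K ∩ {z : ℝ × ℝ | 0 ≤ u₁ * z.1 + u₂ * z.2} =
        A1 ∪ (K ∩ {z : ℝ × ℝ | lam ≤ u₁ * z.1 + u₂ * z.2}) := by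
      rw [hA1def]
      ext z
      simp only [Set.mem_inter_iff, Set.mem_union, Set.mem_setOf_eq]
      constructor
      · rintro ⟨hzK, hz0⟩
        rcases lt_or_ge (u₁ * z.1 + u₂ * z.2) lam with h | h
        · exact Or.inl ⟨hzK, hz0, h⟩
        · exact Or.inr ⟨hzK, h⟩
      · rintro (⟨hzK, hz0, -⟩ | ⟨hzK, hz⟩)
        · exact ⟨hzK, hz0⟩
        · exact ⟨hzK, by linarith⟩
    have hdisj : Disjoint A1 (K ∩ {z : ℝ × ℝ | lam ≤ u₁ * z.1 + u₂ * z.2}) := by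
      rw [Set.disjoint_left]
      rintro z ⟨-, -, h1⟩ ⟨-, h2⟩
      exact absurd h2 (not_le.2 h1)
    have hsum : ∫ z in K ∩ {z : ℝ × ℝ | 0 ≤ u₁ * z.1 + u₂ * z.2},
        (u₁ * (z.1 - a) + u₂ * z.2) * z.1 ^ 2 =
        (∫ z in A1, (u₁ * (z.1 - a) + u₂ * z.2) * z.1 ^ 2) +
        ∫ z in K ∩ {z : ℝ × ℝ | lam ≤ u₁ * z.1 + u₂ * z.2},
          (u₁ * (z.1 - a) + u₂ * z.2) * z.1 ^ 2 := by
      rw [hset]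
      exact setIntegral_union hdisj hA2m (hintK.mono_set Set.inter_subset_left)
        (hintK.mono_set Set.inter_subset_left)
    rw [hsum] at hf0
    linarith
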